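/- Assume μ satisfies Assumption (A) and that Ω⁻ is nonempty, and let ρ = ρ(Ω⁻) be the inradius of Ω⁻. Then for every a ∈ (0, ρ) there exists a constant c > 0 such that for all sufficiently large n, the probability that ρ_n ≥ a is at least 1 − e^{−cn}, where ρ_n is the inradius of Λ_n. -/

import Mathlib

open MeasureTheory ProbabilityTheory Filter Metric
open Topology

/-- Logarithmic potential of a measure on ℂ. -/
noncomputable def logPot (μ : Measure ℂ) (z : ℂ) : ℝ :=
  ∫ w, Real.log (‖z - w‖) ∂μ

/-- Topological support of a measure on ℂ. -/
def msupport (μ : Measure ℂ) : Set ℂ :=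
  {x : ℂ | ∀ U ∈ nhds x, 0 < μ U}

/-- Assumption (A): for every compact `K`, `sup_{z ∈ K} ∫ (log|z-w|)² dμ(w) < ∞`. -/
def AssumptionA (μ : Measure ℂ) : Prop :=
  ∀ K : Set ℂ, IsCompact K → ∃ C : ℝ, ∀ z ∈ K,
    ∫⁻ w, ENNReal.ofReal ((Real.log (‖z - w‖)) ^ 2) ∂μ ≤ ENNReal.ofReal C

/-- Assumption (D): `μ(B(z,r)) ≤ C rᵉ` for all `z` and `r > 0`. -/
def AssumptionD (μ : Measure ℂ) : Prop :=
  ∃ C : ℝ, ∃ ε : ℝ, 0 < ε ∧ ∀ z : ℂ, ∀ r : ℝ, 0 < r →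
    μ (Metric.ball z r) ≤ ENNReal.ofReal (C * r ^ ε)

/-- The filled unit lemniscate of `p_n(z) = ∏_{k<n} (z - X k ω)`. -/
def lemniscate {Ω : Type*} (X : ℕ → Ω → ℂ) (n : ℕ) (ω : Ω) : Set ℂ :=
  {z : ℂ | ‖∏ k ∈ Finset.range n, (z - X k ω)‖ < 1}

/-- Inradius of a planar set: the sup of radii of open disks contained in it (0 if none). -/
noncomputable def inradius (U : Set ℂ) : ℝ :=
  sSup {r : ℝ | 0 < r ∧ ∃ c : ℂ, Metric.ball c r ⊆ U}

namespace LemHelper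

/-- Clipped logarithmic kernel. -/
noncomputable def clip (s : ℝ) (z w : ℂ) : ℝ := Real.log (max s (‖z - w‖))

lemma clip_meas (s : ℝ) (z : ℂ) : Measurable (clip s z) := by
  apply Real.measurable_log.comp
  exact measurable_const.max (continuous_norm.measurable.comp (measurable_const.sub measurable_id))

lemma log_add_le {x d : ℝ} (hx : 0 < x) (hd : 0 ≤ d) :
    Real.log (x + d) ≤ Real.log x + d / x := by
  have h1 : Real.log (x + d) - Real.log x = Real.log ((x + d) / x) := by
    rw [Real.log_div (by positivity) (ne_of_gt hx)]
  have h2 : Real.log ((x + d) / x) ≤ (x + d) / x - 1 :=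
    Real.log_le_sub_one_of_pos (by positivity)
  have h3 : (x + d) / x - 1 = d / x := by field_simp; ring
  linarith [h1, h2, h3 ▸ h2]

lemma clip_lip {s : ℝ} (hs : 0 < s) (z₁ z₂ w : ℂ) :
    clip s z₁ w ≤ clip s z₂ w + ‖z₁ - z₂‖ / s := by
  set u := ‖z₁ - w‖
  set v := ‖z₂ - w‖
  set d := ‖z₁ - z₂‖
  have hd : 0 ≤ d := norm_nonneg _
  have huv : u ≤ v + d := by
    have : z₁ - w = (z₂ - w) + (z₁ - z₂) := by ring
    calc u = ‖(z₂ - w) + (z₁ - z₂)‖ := by rw [← this]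
    _ ≤ v + d := norm_add_le _ _
  have h1 : max s u ≤ max s v + d := by
    rcases le_total u s with h | h
    · have : max s u = s := max_eq_left h
      nlinarith [le_max_left s v]
    · have : max s u = u := max_eq_right h
      nlinarith [le_max_right s v]
  have hsv : 0 < max s v := lt_of_lt_of_le hs (le_max_left _ _)
  calc clip s z₁ w = Real.log (max s u) := rfl
    _ ≤ Real.log (max s v + d) := Real.log_le_log (by positivity) h1
    _ ≤ Real.log (max s v) + d / max s v := log_add_le hsv hd
    _ ≤ clip s z₂ w + d / s := by
        have : d / max s v ≤ d / s := div_le_div_of_nonneg_left hd hs (le_max_left _ _)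
        exact add_le_add_right this _ |>.trans_eq rfl

lemma log_le_clip (s : ℝ) (z w : ℂ) (h : 0 < ‖z - w‖) :
    Real.log (‖z - w‖) ≤ clip s z w :=
  Real.log_le_log h (le_max_right _ _)

lemma abs_clip_le {s D : ℝ} (hs : 0 < s) (hs1 : s ≤ 1) {z w : ℂ}
    (hD : ‖z - w‖ ≤ D) :
    |clip s z w| ≤ -Real.log s + Real.log (max 1 D) := by
  have hls : Real.log s ≤ 0 := Real.log_nonpos hs.le hs1
  have hlD : 0 ≤ Real.log (max 1 D) := Real.log_nonneg (le_max_left _ _)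
  have hlow : Real.log s ≤ clip s z w := Real.log_le_log hs (le_max_left _ _)
  have hup : clip s z w ≤ Real.log (max 1 D) := by
    apply Real.log_le_log (lt_of_lt_of_le hs (le_max_left _ _))
    apply max_le (hs1.trans (le_max_left _ _)) (hD.trans (le_max_right _ _))
  rw [abs_le]
  constructor <;> nlinarith

lemma abs_clip_le_abs_log {s u : ℝ} (hs : 0 < s) (hs1 : s ≤ 1) (hu : 0 < u) :
    |Real.log (max s u)| ≤ |Real.log u| := by
  rcases le_total s u with h | h
  · rw [max_eq_right h]
  · rw [max_eq_left h]
    have h1 : Real.log u ≤ Real.log s := Real.log_le_log hu h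
    have h2 : Real.log s ≤ 0 := Real.log_nonpos hs.le hs1
    rw [abs_of_nonpos h2, abs_of_nonpos (h1.trans h2)]
    linarith

lemma msupport_isClosed (μ : Measure ℂ) : IsClosed (msupport μ) := by
  rw [← isOpen_compl_iff, isOpen_iff_mem_nhds]
  intro x hx
  simp only [msupport, Set.mem_compl_iff, Set.mem_setOf_eq, not_forall] at hx
  obtain ⟨U, hU, hU0⟩ := hx
  have hU0' : μ U = 0 := by simpa using hU0
  obtain ⟨V, hVU, hVopen, hxV⟩ := _root_.mem_nhds_iff.1 hU
  apply _root_.mem_nhds_iff.2 ⟨V, ?_, hVopen, hxV⟩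
  intro y hy
  simp only [msupport, Set.mem_compl_iff, Set.mem_setOf_eq, not_forall]
  refine ⟨V, hVopen.mem_nhds hy, ?_⟩
  simp [le_antisymm ((measure_mono hVU).trans hU0'.le) (zero_le)]

lemma msupport_conull (μ : Measure ℂ) : μ (msupport μ)ᶜ = 0 := by
  apply measure_null_of_locally_null
  intro x hx
  simp only [msupport, Set.mem_compl_iff, Set.mem_setOf_eq, not_forall] at hx
  obtain ⟨U, hU, hU0⟩ := hx
  exact ⟨U, nhdsWithin_le_nhds hU, by simpa using hU0⟩

lemma integrable_log_abs {μ : Measure ℂ} [IsProbabilityMeasure μ] (hA : AssumptionA μ) (z : ℂ) :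
    Integrable (fun w => Real.log (‖z - w‖)) μ := by
  obtain ⟨C, hC⟩ := hA {z} isCompact_singleton
  have hC' := hC z rfl
  have hmeas : Measurable fun w => Real.log (‖z - w‖) :=
    Real.measurable_log.comp (continuous_norm.measurable.comp
      (measurable_const.sub measurable_id))
  refine ⟨hmeas.aestronglyMeasurable, ?_⟩
  rw [hasFiniteIntegral_iff_norm]
  calc ∫⁻ w, ENNReal.ofReal ‖Real.log (‖z - w‖)‖ ∂μ
      ≤ ∫⁻ w, (1 + ENNReal.ofReal ((Real.log (‖z - w‖)) ^ 2)) ∂μ := by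
        apply lintegral_mono
        intro w
        have h1 : ‖Real.log (‖z - w‖)‖ ≤
            1 + (Real.log (‖z - w‖)) ^ 2 := by
          rw [Real.norm_eq_abs]
          nlinarith [abs_nonneg (Real.log (‖z - w‖)),
            sq_abs (Real.log (‖z - w‖)),
            sq_nonneg (|Real.log (‖z - w‖)| - 1)]
        calc ENNReal.ofReal ‖Real.log (‖z - w‖)‖
            ≤ ENNReal.ofReal (1 + (Real.log (‖z - w‖)) ^ 2) :=
              ENNReal.ofReal_le_ofReal h1
          _ = 1 + ENNReal.ofReal ((Real.log (‖z - w‖)) ^ 2) := by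
              rw [ENNReal.ofReal_add (by norm_num) (sq_nonneg _), ENNReal.ofReal_one]
    _ = 1 + ∫⁻ w, ENNReal.ofReal ((Real.log (‖z - w‖)) ^ 2) ∂μ := by
        rw [lintegral_add_left measurable_const]
        simp
    _ ≤ 1 + ENNReal.ofReal C := by exact add_le_add_right hC' 1
    _ < ⊤ := by finiteness

lemma integrable_clip {μ : Measure ℂ} [IsProbabilityMeasure μ] {R : ℝ}
    (hR : msupport μ ⊆ closedBall 0 R) {s : ℝ} (hs : 0 < s) (hs1 : s ≤ 1) (z : ℂ) :
    Integrable (clip s z) μ := by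
  apply Integrable.mono' (integrable_const (-Real.log s + Real.log (max 1 (‖z‖ + R))))
    ((clip_meas s z).aestronglyMeasurable)
  have hae : ∀ᵐ w ∂μ, w ∈ msupport μ := by
    rw [ae_iff]
    exact msupport_conull μ
  filter_upwards [hae] with w hw
  rw [Real.norm_eq_abs]
  apply abs_clip_le hs hs1
  have hwR : ‖w‖ ≤ R := by
    have := hR hw
    simpa [Complex.dist_eq] using this
  calc ‖z - w‖ ≤ ‖z‖ + ‖w‖ := by
        simpa [sub_eq_add_neg] using norm_add_le z (-w)
    _ ≤ ‖z‖ + R := by linarith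

/-- Clipped logarithmic potential. -/
noncomputable def clipPot (μ : Measure ℂ) (s : ℝ) (z : ℂ) : ℝ := ∫ w, clip s z w ∂μ

lemma clipPot_lip {μ : Measure ℂ} [IsProbabilityMeasure μ] {R : ℝ}
    (hR : msupport μ ⊆ closedBall 0 R) {s : ℝ} (hs : 0 < s) (hs1 : s ≤ 1) (z₁ z₂ : ℂ) :
    clipPot μ s z₁ ≤ clipPot μ s z₂ + ‖z₁ - z₂‖ / s := by
  have h1 : clipPot μ s z₁ ≤ ∫ w, (clip s z₂ w + ‖z₁ - z₂‖ / s) ∂μ := by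
    apply integral_mono (integrable_clip hR hs hs1 z₁)
      ((integrable_clip hR hs hs1 z₂).add (integrable_const _))
    intro w
    exact clip_lip hs z₁ z₂ w
  rw [integral_add (integrable_clip hR hs hs1 z₂) (integrable_const _), integral_const] at h1
  simpa [clipPot] using h1

lemma exists_clip_neg {μ : Measure ℂ} [IsProbabilityMeasure μ] (hA : AssumptionA μ) {R : ℝ}
    (hR : msupport μ ⊆ closedBall 0 R) {z : ℂ} (hz : logPot μ z < 0) :
    ∃ s : ℝ, 0 < s ∧ s < 1 ∧ clipPot μ s z < 0 := by
  have hint := integrable_log_abs hA z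
  set T : Set ℂ := {z}ᶜ with hT
  have hTm : MeasurableSet T := (measurableSet_singleton z).compl
  have hzero : ∀ (f : ℂ → ℝ), ∫ w in Tᶜ, f w ∂μ = (μ {z}).toReal • f z := by
    intro f
    rw [hT, compl_compl]
    exact integral_singleton f z
  have hsplit : logPot μ z = ∫ w in T, Real.log (‖z - w‖) ∂μ := by
    have h1 := integral_add_compl hTm hint
    have h2 := hzero (fun w => Real.log (‖z - w‖))
    simp only [sub_self, norm_zero, Real.log_zero, smul_zero] at h2
    rw [logPot, ← h1, h2, add_zero]
  have hspos : ∀ n : ℕ, (0:ℝ) < (1/2:ℝ)^(n+1) := fun n => by positivity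
  have hslt1 : ∀ n : ℕ, ((1/2:ℝ))^(n+1) < 1 :=
    fun n => pow_lt_one₀ (by norm_num) (by norm_num) (Nat.succ_ne_zero n)
  have htend : Tendsto (fun n : ℕ => ∫ w in T, clip ((1/2)^(n+1)) z w ∂μ) atTop
      (𝓝 (∫ w in T, Real.log (‖z - w‖) ∂μ)) := by
    apply tendsto_integral_of_dominated_convergence
      (fun w => |Real.log (‖z - w‖)|)
    · exact fun n => ((clip_meas _ z).aestronglyMeasurable).restrict
    · exact hint.abs.restrict
    · intro n
      rw [ae_restrict_iff' hTm]
      apply ae_of_all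
      intro w hw
      have hwz : w ≠ z := hw
      have hpos : 0 < ‖z - w‖ := by
        rw [norm_pos_iff]
        exact sub_ne_zero.2 (Ne.symm hwz)
      rw [Real.norm_eq_abs]
      exact abs_clip_le_abs_log (hspos n) (hslt1 n).le hpos
    · rw [ae_restrict_iff' hTm]
      apply ae_of_all
      intro w hw
      have hwz : w ≠ z := hw
      have hpos : 0 < ‖z - w‖ := by
        rw [norm_pos_iff]
        exact sub_ne_zero.2 (Ne.symm hwz)
      have h0 : Tendsto (fun n : ℕ => ((1/2:ℝ))^(n+1)) atTop (𝓝 0) := by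
        have := tendsto_pow_atTop_nhds_zero_of_lt_one (by norm_num : (0:ℝ) ≤ 1/2)
          (by norm_num : (1/2:ℝ) < 1)
        exact this.comp (tendsto_add_atTop_nat 1)
      have hev : ∀ᶠ n : ℕ in atTop,
          clip ((1/2)^(n+1)) z w = Real.log (‖z - w‖) := by
        filter_upwards [h0.eventually_lt_const hpos] with n hn
        rw [clip, max_eq_right hn.le]
      exact Tendsto.congr' (by filter_upwards [hev] with n hn using hn.symm) tendsto_const_nhds
  have hlt : ∫ w in T, Real.log (‖z - w‖) ∂μ < 0 := by rw [← hsplit]; exact hz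
  obtain ⟨n, hn⟩ := (htend.eventually_lt_const hlt).exists
  refine ⟨(1/2)^(n+1), hspos n, hslt1 n, ?_⟩
  have hsplit2 : clipPot μ ((1/2)^(n+1)) z =
      ∫ w in T, clip ((1/2)^(n+1)) z w ∂μ + (μ {z}).toReal • clip ((1/2)^(n+1)) z z := by
    rw [clipPot, ← integral_add_compl hTm (integrable_clip hR (hspos n) (hslt1 n).le z),
      hzero]
  have hclipz : clip ((1/2)^(n+1)) z z ≤ 0 := by
    rw [clip, sub_self, norm_zero, max_eq_left (hspos n).le]
    exact Real.log_nonpos (hspos n).le (hslt1 n).le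
  have htr : (0:ℝ) ≤ (μ {z}).toReal := ENNReal.toReal_nonneg
  rw [hsplit2, smul_eq_mul]
  nlinarith

lemma cover {μ : Measure ℂ} [IsProbabilityMeasure μ] (hA : AssumptionA μ) {R : ℝ}
    (hR : msupport μ ⊆ closedBall 0 R) {K : Set ℂ} (hK : IsCompact K) (hKne : K.Nonempty)
    (hneg : ∀ z ∈ K, logPot μ z < 0) :
    ∃ δ s₀ : ℝ, 0 < δ ∧ δ ≤ 1 ∧ 0 < s₀ ∧ s₀ < 1 ∧
      ∀ z ∈ K, ∃ s, s₀ ≤ s ∧ s < 1 ∧ clipPot μ s z ≤ -δ := by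
  have hch : ∀ z : K, ∃ s : ℝ, 0 < s ∧ s < 1 ∧ clipPot μ s (z : ℂ) < 0 :=
    fun z => exists_clip_neg hA hR (hneg z z.2)
  choose s hs0 hs1 hsneg using hch
  set δf : K → ℝ := fun z => -clipPot μ (s z) (z : ℂ) / 2 with hδf
  have hδfpos : ∀ z : K, 0 < δf z := fun z => by
    have := hsneg z; simp only [hδf]; linarith
  have hcov : K ⊆ ⋃ z : K, ball (z : ℂ) (s z * δf z) := by
    intro x hx
    exact Set.mem_iUnion.2 ⟨⟨x, hx⟩, mem_ball_self (mul_pos (hs0 ⟨x, hx⟩) (hδfpos ⟨x, hx⟩))⟩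
  obtain ⟨t, ht⟩ := hK.elim_finite_subcover (fun z : K => ball (z : ℂ) (s z * δf z))
    (fun z => isOpen_ball) hcov
  have htne : t.Nonempty := by
    obtain ⟨x, hx⟩ := hKne
    obtain ⟨i, hit, _⟩ := Set.mem_iUnion₂.1 (ht hx)
    exact ⟨i, hit⟩
  refine ⟨min (t.inf' htne δf) 1, min (t.inf' htne s) (1/2), ?_, min_le_right _ _, ?_, ?_, ?_⟩
  · apply lt_min _ one_pos
    rw [Finset.lt_inf'_iff]
    exact fun i _ => hδfpos i
  · apply lt_min _ (by norm_num)
    rw [Finset.lt_inf'_iff]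
    exact fun i _ => hs0 i
  · exact lt_of_le_of_lt (min_le_right _ _) (by norm_num)
  · intro z hz
    obtain ⟨i, hit, hzi⟩ := Set.mem_iUnion₂.1 (ht hz)
    refine ⟨s i, (min_le_left _ _).trans (Finset.inf'_le _ hit), hs1 i, ?_⟩
    have hlip := clipPot_lip hR (hs0 i) (hs1 i).le z (i : ℂ)
    have hd : ‖z - (i : ℂ)‖ < s i * δf i := by
      rw [mem_ball, Complex.dist_eq] at hzi; exact hzi
    have hdiv : ‖z - (i : ℂ)‖ / s i < δf i := by
      rw [div_lt_iff₀ (hs0 i)]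
      calc ‖z - (i:ℂ)‖ < s i * δf i := hd
        _ = δf i * s i := mul_comm _ _
    have h2 : clipPot μ (s i) (i : ℂ) = -2 * δf i := by
      simp only [hδf]; ring
    have h3 : clipPot μ (s i) z ≤ -δf i := by linarith
    have h4 : min (t.inf' htne δf) 1 ≤ δf i := (min_le_left _ _).trans (Finset.inf'_le _ hit)
    linarith

lemma exp_quad {x : ℝ} (hx : |x| ≤ 1) : Real.exp x ≤ 1 + x + x ^ 2 := by
  have h := Real.exp_bound hx (by norm_num : 0 < 2)
  have hsum : ∑ m ∈ Finset.range 2, x ^ m / (m.factorial : ℝ) = 1 + x := by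
    simp [Finset.sum_range_succ]
  rw [hsum] at h
  norm_num [Nat.factorial] at h
  nlinarith [sq_abs x, (abs_le.1 h).2, sq_nonneg x]

lemma mgf_one {μ : Measure ℂ} [IsProbabilityMeasure μ] {f : ℂ → ℝ} (hf : Measurable f)
    {B δ : ℝ} (hB : 1 ≤ B) (hδ : 0 < δ) (hδ1 : δ ≤ 1)
    (hbd : ∀ᵐ w ∂μ, |f w| ≤ B) (hmean : ∫ w, f w ∂μ ≤ -δ) :
    ∫ w, Real.exp (δ / (2 * B ^ 2) * f w) ∂μ ≤ Real.exp (-(δ / (2 * B ^ 2) * δ) / 2) := by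
  set t := δ / (2 * B ^ 2) with hts
  have hB0 : 0 < B := lt_of_lt_of_le one_pos hB
  have ht0 : 0 < t := by positivity
  have htB : t * B ≤ 1 := by
    rw [hts, div_mul_eq_mul_div, div_le_one (by positivity)]
    nlinarith
  have hintf : Integrable f μ := by
    apply Integrable.mono' (integrable_const B) hf.aestronglyMeasurable
    filter_upwards [hbd] with w hw using by rwa [Real.norm_eq_abs]
  have hintf2 : Integrable (fun w => 1 + t * f w + t ^ 2 * B ^ 2) μ :=
    ((integrable_const _).add (hintf.const_mul t)).add (integrable_const _)
  have hintexp : Integrable (fun w => Real.exp (t * f w)) μ := by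
    apply Integrable.mono' (integrable_const (Real.exp 1))
      ((hf.const_mul t).exp).aestronglyMeasurable
    filter_upwards [hbd] with w hw
    rw [Real.norm_eq_abs, abs_of_pos (Real.exp_pos _), Real.exp_le_exp]
    calc t * f w ≤ t * |f w| := by nlinarith [le_abs_self (f w)]
      _ ≤ t * B := by nlinarith
      _ ≤ 1 := htB
  have hpt : ∀ᵐ w ∂μ, Real.exp (t * f w) ≤ 1 + t * f w + t ^ 2 * B ^ 2 := by
    filter_upwards [hbd] with w hw
    have habs : |t * f w| ≤ 1 := by
      rw [abs_mul, abs_of_pos ht0]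
      calc t * |f w| ≤ t * B := by nlinarith
        _ ≤ 1 := htB
    calc Real.exp (t * f w) ≤ 1 + t * f w + (t * f w) ^ 2 := exp_quad habs
      _ ≤ 1 + t * f w + t ^ 2 * B ^ 2 := by
          have h1 : (t * f w) ^ 2 = t ^ 2 * (f w) ^ 2 := by ring
          have h2 : (f w) ^ 2 ≤ B ^ 2 := by nlinarith [sq_abs (f w), abs_nonneg (f w)]
          nlinarith [sq_nonneg t]
  have h1 : ∫ w, Real.exp (t * f w) ∂μ ≤ ∫ w, (1 + t * f w + t ^ 2 * B ^ 2) ∂μ :=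
    integral_mono_ae hintexp hintf2 hpt
  have h2 : ∫ w, (1 + t * f w + t ^ 2 * B ^ 2) ∂μ = 1 + t * ∫ w, f w ∂μ + t ^ 2 * B ^ 2 := by
    have e1 : Integrable (fun w => 1 + t * f w) μ := (integrable_const _).add (hintf.const_mul t)
    have e2 : Integrable (fun _ : ℂ => t ^ 2 * B ^ 2) μ := integrable_const _
    rw [integral_add e1 e2, integral_add (integrable_const 1) (hintf.const_mul t),
      integral_const, integral_const, integral_const_mul]
    simp
  have h3 : t ^ 2 * B ^ 2 = t * δ / 2 := by
    rw [hts]; field_simp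
  have h4 : t * ∫ w, f w ∂μ ≤ t * (-δ) := mul_le_mul_of_nonneg_left hmean ht0.le
  have h5 : 1 - t * δ / 2 ≤ Real.exp (-(t * δ) / 2) := by
    have := Real.add_one_le_exp (-(t * δ) / 2)
    linarith
  calc ∫ w, Real.exp (t * f w) ∂μ ≤ 1 + t * ∫ w, f w ∂μ + t ^ 2 * B ^ 2 := h2 ▸ h1
    _ ≤ 1 + t * (-δ) + t * δ / 2 := by rw [h3] at *; linarith
    _ = 1 - t * δ / 2 := by ring
    _ ≤ Real.exp (-(t * δ) / 2) := h5

lemma chernoff {Ω : Type*} [MeasurableSpace Ω] (P : Measure Ω) [IsProbabilityMeasure P]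
    (μ : Measure ℂ) [IsProbabilityMeasure μ]
    (X : ℕ → Ω → ℂ) (hmeas : ∀ i, Measurable (X i))
    (hid : ∀ i, Measure.map (X i) P = μ)
    (hindep : iIndepFun X P)
    {f : ℂ → ℝ} (hf : Measurable f) {B δ : ℝ} (hB : 1 ≤ B) (hδ : 0 < δ) (hδ1 : δ ≤ 1)
    (hbd : ∀ᵐ w ∂μ, |f w| ≤ B) (hmean : ∫ w, f w ∂μ ≤ -δ) (n : ℕ) :
    P {ω | -(δ * n) / 4 ≤ ∑ k ∈ Finset.range n, f (X k ω)} ≤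
      ENNReal.ofReal (Real.exp (-(δ ^ 2 / (8 * B ^ 2)) * n)) := by
  classical
  set t := δ / (2 * B ^ 2) with hts
  have hB0 : 0 < B := lt_of_lt_of_le one_pos hB
  have ht0 : 0 < t := by positivity
  have htB : t * B ≤ 1 := by
    rw [hts, div_mul_eq_mul_div, div_le_one (by positivity)]
    nlinarith
  set Y : ℕ → Ω → ℝ := fun k => f ∘ X k with hY
  have hYmeas : ∀ k, Measurable (Y k) := fun k => hf.comp (hmeas k)
  have hYindep : iIndepFun Y P :=
    hindep.comp (fun _ => f) (fun _ => hf)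
  have hbdk : ∀ k, ∀ᵐ ω ∂P, |Y k ω| ≤ B := by
    intro k
    have h1 : ∀ᵐ w ∂(Measure.map (X k) P), |f w| ≤ B := by rw [hid k]; exact hbd
    exact (MeasureTheory.ae_map_iff (hmeas k).aemeasurable
      (measurableSet_le hf.abs measurable_const)).1 h1
  have hmgfk : ∀ k, mgf (Y k) P t = ∫ w, Real.exp (t * f w) ∂μ := by
    intro k
    rw [mgf, ← hid k, integral_map (hmeas k).aemeasurable
      ((hf.const_mul t).exp).aestronglyMeasurable]
    rfl
  have hintk : ∀ k, Integrable (fun ω => Real.exp (t * Y k ω)) P := by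
    intro k
    apply Integrable.mono' (integrable_const (Real.exp 1))
      (((hYmeas k).const_mul t).exp).aestronglyMeasurable
    filter_upwards [hbdk k] with ω hω
    rw [Real.norm_eq_abs, abs_of_pos (Real.exp_pos _), Real.exp_le_exp]
    calc t * Y k ω ≤ t * |Y k ω| := by nlinarith [le_abs_self (Y k ω)]
      _ ≤ t * B := by nlinarith
      _ ≤ 1 := htB
  have hmgfsum : mgf (∑ k ∈ Finset.range n, Y k) P t = (∫ w, Real.exp (t * f w) ∂μ) ^ n := by
    rw [hYindep.mgf_sum hYmeas, Finset.prod_congr rfl (fun k _ => hmgfk k),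
      Finset.prod_const, Finset.card_range]
  have hm : Measurable (fun ω => (∑ k ∈ Finset.range n, Y k) ω) := by
    simpa [Finset.sum_apply] using
      Finset.measurable_sum (Finset.range n) (fun k _ => hYmeas k)
  have hintsum : Integrable (fun ω => Real.exp (t * (∑ k ∈ Finset.range n, Y k) ω)) P := by
    apply Integrable.mono' (integrable_const (Real.exp n))
      ((hm.const_mul t).exp).aestronglyMeasurable
    have hball : ∀ᵐ ω ∂P, ∀ k ∈ Finset.range n, |Y k ω| ≤ B := by
      rw [Filter.eventually_all_finset]
      exact fun k _ => hbdk k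
    filter_upwards [hball] with ω hω
    rw [Real.norm_eq_abs, abs_of_pos (Real.exp_pos _), Real.exp_le_exp, Finset.sum_apply]
    have hsum : ∑ k ∈ Finset.range n, Y k ω ≤ n * B := by
      calc ∑ k ∈ Finset.range n, Y k ω ≤ ∑ _k ∈ Finset.range n, B :=
            Finset.sum_le_sum (fun k hk => (abs_le.1 (hω k hk)).2)
        _ = n * B := by simp [mul_comm]
    calc t * ∑ k ∈ Finset.range n, Y k ω ≤ t * (n * B) := by
          exact mul_le_mul_of_nonneg_left hsum ht0.le
      _ = (n : ℝ) * (t * B) := by ring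
      _ ≤ n * 1 := by nlinarith [Nat.cast_nonneg (α := ℝ) n]
      _ = n := mul_one _
  have hch := measure_ge_le_exp_mul_mgf (μ := P) (X := ∑ k ∈ Finset.range n, Y k)
    (-(δ * n) / 4) ht0.le hintsum
  have hset : {ω | -(δ * n) / 4 ≤ ∑ k ∈ Finset.range n, f (X k ω)} =
      {ω | -(δ * n) / 4 ≤ (∑ k ∈ Finset.range n, Y k) ω} := by
    ext ω
    simp [Finset.sum_apply, hY, Function.comp]
  have hInonneg : 0 ≤ ∫ w, Real.exp (t * f w) ∂μ :=
    integral_nonneg (fun w => (Real.exp_pos _).le)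
  have hone := mgf_one hf hB hδ hδ1 hbd hmean
  rw [← hts] at hone
  have hfinal : Real.exp (-t * (-(δ * n) / 4)) * mgf (∑ k ∈ Finset.range n, Y k) P t ≤
      Real.exp (-(δ ^ 2 / (8 * B ^ 2)) * n) := by
    rw [hmgfsum]
    calc Real.exp (-t * (-(δ * n) / 4)) * (∫ w, Real.exp (t * f w) ∂μ) ^ n
        ≤ Real.exp (t * δ * n / 4) * (Real.exp (-(t * δ) / 2)) ^ n := by
          apply mul_le_mul (le_of_eq (by congr 1; ring))
            (pow_le_pow_left₀ hInonneg hone n) (pow_nonneg hInonneg n) (Real.exp_pos _).le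
      _ = Real.exp (t * δ * n / 4 + n * (-(t * δ) / 2)) := by
          rw [← Real.exp_nat_mul, ← Real.exp_add]
      _ = Real.exp (-(δ ^ 2 / (8 * B ^ 2)) * n) := by
          congr 1
          rw [hts]
          field_simp
          ring
  rw [hset]
  exact (ENNReal.le_ofReal_iff_toReal_le (measure_ne_top P _) (Real.exp_pos _).le).2
    (hch.trans hfinal)

/-- Mesh size of the net. -/
noncomputable def mesh (u : ℝ) (n : ℕ) : ℝ := u / ((n : ℝ) + 1) ^ 3

/-- Half-size of the index range of the net. -/
noncomputable def gridN (a u : ℝ) (n : ℕ) : ℕ := ⌈(a + 2 * u) / mesh u n⌉₊ + 1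

/-- The net: a square grid of mesh `mesh u n` around `c`. -/
noncomputable def grid (c : ℂ) (a u : ℝ) (n : ℕ) : Finset ℂ :=
  ((Finset.Icc (-(gridN a u n : ℤ)) (gridN a u n)) ×ˢ
    (Finset.Icc (-(gridN a u n : ℤ)) (gridN a u n))).image
    (fun p => c + (mesh u n : ℂ) * ((p.1 : ℂ) + (p.2 : ℂ) * Complex.I))

lemma one_le_cube (n : ℕ) : (1 : ℝ) ≤ ((n : ℝ) + 1) ^ 3 := by
  have h1 : (0 : ℝ) ≤ (n : ℝ) := Nat.cast_nonneg n
  nlinarith [pow_nonneg h1 3, sq_nonneg (n : ℝ)]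

lemma mesh_pos {u : ℝ} (hu : 0 < u) (n : ℕ) : 0 < mesh u n := by
  rw [mesh]; positivity

lemma mesh_le {u : ℝ} (hu : 0 < u) (n : ℕ) : mesh u n ≤ u := by
  rw [mesh]
  exact div_le_self hu.le (one_le_cube n)

lemma grid_cover (c : ℂ) {a u : ℝ} (ha : 0 ≤ a) (hu : 0 < u) (n : ℕ) {z : ℂ}
    (hz : z ∈ closedBall c (a + 2 * u)) :
    ∃ g ∈ grid c a u n, ‖z - g‖ ≤ mesh u n ∧ g ∈ closedBall c (a + 3 * u) := by
  set h := mesh u n with hh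
  have hpos : 0 < h := mesh_pos hu n
  set N := gridN a u n with hN
  set j : ℤ := round ((z - c).re / h) with hj
  set k : ℤ := round ((z - c).im / h) with hk
  set g : ℂ := c + (h : ℂ) * ((j : ℂ) + (k : ℂ) * Complex.I) with hg
  have hzc : ‖z - c‖ ≤ a + 2 * u := by
    rw [mem_closedBall, Complex.dist_eq] at hz; exact hz
  have hgre : (z - g).re = (z - c).re - h * (j : ℝ) := by
    simp [hg, Complex.add_re, Complex.sub_re, Complex.mul_re, Complex.add_im,
      Complex.mul_im, Complex.I_re, Complex.I_im, Complex.ofReal_re, Complex.ofReal_im]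
    ring
  have hgim : (z - g).im = (z - c).im - h * (k : ℝ) := by
    simp [hg, Complex.add_re, Complex.sub_im, Complex.add_im, Complex.mul_re,
      Complex.mul_im, Complex.I_re, Complex.I_im, Complex.ofReal_re, Complex.ofReal_im]
    ring
  have hre : |(z - c).re - h * (j : ℝ)| ≤ h / 2 := by
    have h1 := abs_sub_round ((z - c).re / h)
    have h2 : (z - c).re - h * (j : ℝ) = h * ((z - c).re / h - (j : ℝ)) := by
      field_simp
    rw [h2, abs_mul, abs_of_pos hpos]
    calc h * |(z - c).re / h - (j : ℝ)| ≤ h * (1/2) :=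
          mul_le_mul_of_nonneg_left h1 hpos.le
      _ = h / 2 := by ring
  have him : |(z - c).im - h * (k : ℝ)| ≤ h / 2 := by
    have h1 := abs_sub_round ((z - c).im / h)
    have h2 : (z - c).im - h * (k : ℝ) = h * ((z - c).im / h - (k : ℝ)) := by
      field_simp
    rw [h2, abs_mul, abs_of_pos hpos]
    calc h * |(z - c).im / h - (k : ℝ)| ≤ h * (1/2) :=
          mul_le_mul_of_nonneg_left h1 hpos.le
      _ = h / 2 := by ring
  have hzg : ‖z - g‖ ≤ h := by
    calc ‖z - g‖ ≤ |(z - g).re| + |(z - g).im| :=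
          Complex.norm_le_abs_re_add_abs_im _
      _ ≤ h / 2 + h / 2 := by rw [hgre, hgim]; exact add_le_add hre him
      _ = h := by ring
  -- index bounds
  have hidx : ∀ x : ℝ, |x| ≤ a + 2 * u → |(round (x / h) : ℝ)| ≤ (N : ℝ) := by
    intro x hx
    have h2 := abs_sub_round (x / h)
    have h3 : |(round (x / h) : ℝ)| ≤ |x / h| + 1 / 2 := by
      have h4 := abs_sub_abs_le_abs_sub ((round (x / h) : ℝ)) (x / h)
      rw [abs_sub_comm] at h2
      linarith
    have h5 : |x / h| ≤ (a + 2 * u) / h := by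
      rw [abs_div, abs_of_pos hpos, div_le_div_iff₀ hpos hpos]
      exact mul_le_mul_of_nonneg_right hx hpos.le
    have h6 : (a + 2 * u) / h ≤ (⌈(a + 2 * u) / h⌉₊ : ℝ) := Nat.le_ceil _
    have h7 : (N : ℝ) = (⌈(a + 2 * u) / h⌉₊ : ℝ) + 1 := by
      rw [hN, gridN, ← hh]; push_cast; ring
    linarith
  have hjb : j ∈ Finset.Icc (-(N : ℤ)) (N : ℤ) := by
    have h1 := hidx (z - c).re ((Complex.abs_re_le_norm _).trans hzc)
    rw [← hj] at h1
    have hZ : |j| ≤ (N : ℤ) := by exact_mod_cast h1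
    exact Finset.mem_Icc.2 (abs_le.1 hZ)
  have hkb : k ∈ Finset.Icc (-(N : ℤ)) (N : ℤ) := by
    have h1 := hidx (z - c).im ((Complex.abs_im_le_norm _).trans hzc)
    rw [← hk] at h1
    have hZ : |k| ≤ (N : ℤ) := by exact_mod_cast h1
    exact Finset.mem_Icc.2 (abs_le.1 hZ)
  refine ⟨g, ?_, hzg, ?_⟩
  · simp only [grid, Finset.mem_image, Finset.mem_product]
    exact ⟨(j, k), ⟨hjb, hkb⟩, rfl⟩
  · rw [mem_closedBall, Complex.dist_eq]
    have htri : ‖g - c‖ ≤ ‖g - z‖ + ‖z - c‖ := by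
      have := norm_add_le (g - z) (z - c)
      rwa [sub_add_sub_cancel] at this
    have hgz2 : ‖g - z‖ = ‖z - g‖ := norm_sub_rev _ _
    have hhu : h ≤ u := mesh_le hu n
    rw [hgz2] at htri
    linarith

lemma grid_card (c : ℂ) (a u : ℝ) (n : ℕ) :
    (grid c a u n).card ≤ (2 * gridN a u n + 1) ^ 2 := by
  classical
  set N := gridN a u n with hN
  calc (grid c a u n).card
      ≤ ((Finset.Icc (-(N : ℤ)) (N : ℤ)) ×ˢ (Finset.Icc (-(N : ℤ)) (N : ℤ))).card :=
        Finset.card_image_le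
    _ = (Finset.Icc (-(N : ℤ)) (N : ℤ)).card ^ 2 := by
        rw [Finset.card_product]; ring
    _ = (2 * N + 1) ^ 2 := by
        rw [Int.card_Icc]
        congr 1
        have h1 : (N : ℤ) + 1 - -(N : ℤ) = ((2 * N + 1 : ℕ) : ℤ) := by push_cast; ring
        rw [h1, Int.toNat_natCast]

lemma gridN_le {a u : ℝ} (ha : 0 ≤ a) (hu : 0 < u) (n : ℕ) :
    (gridN a u n : ℝ) ≤ ((a + 2 * u) / u + 2) * ((n : ℝ) + 1) ^ 3 := by
  have hp : (0 : ℝ) < ((n : ℝ) + 1) ^ 3 := by positivity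
  have hp1 : (1 : ℝ) ≤ ((n : ℝ) + 1) ^ 3 := one_le_cube n
  have h1 : (a + 2 * u) / mesh u n = (a + 2 * u) / u * ((n : ℝ) + 1) ^ 3 := by
    rw [mesh]
    field_simp
  have h2 : (gridN a u n : ℝ) ≤ (a + 2 * u) / mesh u n + 2 := by
    rw [gridN]
    push_cast
    have h3 := Nat.ceil_lt_add_one
      (div_nonneg (by linarith) (mesh_pos hu n).le : (0:ℝ) ≤ (a + 2 * u) / mesh u n)
    linarith
  have h4 : (0:ℝ) ≤ (a + 2*u)/u := by positivity
  calc (gridN a u n : ℝ) ≤ (a + 2 * u) / u * ((n : ℝ) + 1) ^ 3 + 2 := by rw [← h1]; exact h2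
    _ ≤ (a + 2 * u) / u * ((n : ℝ) + 1) ^ 3 + 2 * ((n : ℝ) + 1) ^ 3 := by nlinarith
    _ = ((a + 2 * u) / u + 2) * ((n : ℝ) + 1) ^ 3 := by ring

lemma det (ctr : ℂ) {a u δ R : ℝ} (s : ℂ → ℝ) {n : ℕ} (x : ℕ → ℂ)
    (ha : 0 < a) (hu : 0 < u) (hδ : 0 < δ) (hn1 : 1 ≤ n)
    (hn : (32 : ℝ) ≤ δ * ((n : ℝ) * ((n : ℝ) + 1)))
    (hx : ∀ k < n, ‖x k‖ ≤ R)
    (hb : ∀ g ∈ grid ctr a u n, g ∈ closedBall ctr (a + 3 * u) →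
      (∑ k ∈ Finset.range n, Real.log (max (s g) (‖g - x k‖))) ≤ -(δ * n) / 4) :
    a ≤ inradius {z : ℂ | ‖∏ k ∈ Finset.range n, (z - x k)‖ < 1} := by
  have hn0 : (1 : ℝ) ≤ (n : ℝ) := by exact_mod_cast hn1
  set d : ℝ := u / (2 * ((n : ℝ) + 1)) with hd
  have hdpos : 0 < d := by rw [hd]; positivity
  have hpos : 0 < mesh u n := mesh_pos hu n
  have hhd : mesh u n ≤ d / 2 := by
    have hne : ((n : ℝ) + 1) ≠ 0 := by positivity
    have hde : d / 2 = u / (4 * ((n : ℝ) + 1)) := by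
      rw [hd, div_div]
      congr 1
      ring
    rw [hde, mesh]
    apply div_le_div_of_nonneg_left hu.le (by positivity)
    have key : (0:ℝ) ≤ ((n : ℝ) - 1) * (((n : ℝ) + 1) * ((n : ℝ) + 3)) :=
      mul_nonneg (by linarith) (mul_nonneg (by linarith) (by linarith))
    nlinarith [key]
  -- Step A: pick a radius avoiding the roots
  have hradius : ∃ q ∈ Set.Icc (a + u) (a + 2 * u),
      ∀ k < n, d ≤ |q - ‖x k - ctr‖| := by
    by_contra hcon
    push_neg at hcon
    have hsub : Set.Icc (a + u) (a + 2 * u) ⊆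
        ⋃ k ∈ Finset.range n,
          Set.Ioo (‖x k - ctr‖ - d) (‖x k - ctr‖ + d) := by
      intro q hq
      obtain ⟨k, hk, hlt⟩ := hcon q hq
      apply Set.mem_biUnion (Finset.mem_range.2 hk)
      rw [Set.mem_Ioo]
      rw [abs_lt] at hlt
      constructor <;> linarith [hlt.1, hlt.2]
    have hv1 : volume (Set.Icc (a + u) (a + 2 * u)) = ENNReal.ofReal u := by
      rw [Real.volume_Icc]; congr 1; ring
    have hv2 : volume (⋃ k ∈ Finset.range n,
        Set.Ioo (‖x k - ctr‖ - d) (‖x k - ctr‖ + d)) ≤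
        ENNReal.ofReal ((n : ℝ) * (2 * d)) := by
      apply (measure_biUnion_finset_le _ _).trans
      have heach : ∀ k ∈ Finset.range n,
          volume (Set.Ioo (‖x k - ctr‖ - d) (‖x k - ctr‖ + d)) =
            ENNReal.ofReal (2 * d) := by
        intro k _
        rw [Real.volume_Ioo]; congr 1; ring
      rw [Finset.sum_congr rfl heach, Finset.sum_const, Finset.card_range, nsmul_eq_mul,
        ← ENNReal.ofReal_natCast n, ← ENNReal.ofReal_mul (Nat.cast_nonneg n)]
    have hlt : (n : ℝ) * (2 * d) < u := by
      have h2d : 2 * d = u / ((n : ℝ) + 1) := by rw [hd]; field_simp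
      rw [h2d]
      have he : (n : ℝ) * (u / ((n : ℝ) + 1)) = (n : ℝ) * u / ((n : ℝ) + 1) := by ring
      rw [he, div_lt_iff₀ (by positivity)]
      nlinarith
    have hcontr : ENNReal.ofReal u ≤ ENNReal.ofReal ((n : ℝ) * (2 * d)) :=
      hv1 ▸ ((measure_mono hsub).trans hv2)
    exact absurd hcontr (not_le.2 ((ENNReal.ofReal_lt_ofReal_iff hu).2 hlt))
  obtain ⟨q, hqIcc, hqd⟩ := hradius
  have hq0 : 0 < q := lt_of_lt_of_le (by linarith) hqIcc.1
  -- Step B: bound on the circle of radius q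
  have hcirc : ∀ z : ℂ, ‖z - ctr‖ = q →
      ‖∏ k ∈ Finset.range n, (z - x k)‖ ≤ Real.exp (-(δ * n) / 8) := by
    intro z hz
    have hzball : z ∈ closedBall ctr (a + 2 * u) := by
      rw [mem_closedBall, Complex.dist_eq, hz]; exact hqIcc.2
    obtain ⟨g, hggrid, hzg, hgK⟩ := grid_cover ctr ha.le hu n hzball
    have hlbz : ∀ k < n, d ≤ ‖z - x k‖ := by
      intro k hk
      have h1 : |‖z - ctr‖ - ‖x k - ctr‖| ≤ ‖z - x k‖ := by
        have h2 := abs_norm_sub_norm_le (z - ctr) (x k - ctr)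
        rw [sub_sub_sub_cancel_right] at h2
        simpa using h2
      calc d ≤ |q - ‖x k - ctr‖| := hqd k hk
        _ = |‖z - ctr‖ - ‖x k - ctr‖| := by rw [hz]
        _ ≤ _ := h1
    have htri : ∀ k, ‖z - x k‖ ≤ ‖z - g‖ + ‖g - x k‖ := by
      intro k
      have h2 := norm_add_le (z - g) (g - x k)
      rwa [sub_add_sub_cancel] at h2
    have htri2 : ∀ k, ‖g - x k‖ ≥ ‖z - x k‖ - ‖z - g‖ := by
      intro k
      linarith [htri k]
    have hlbg : ∀ k < n, d / 2 ≤ ‖g - x k‖ := by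
      intro k hk
      have := hlbz k hk
      have := htri2 k
      linarith [hzg, hhd]
    have hfac : ∀ k < n, Real.log (‖z - x k‖) ≤
        Real.log (max (s g) (‖g - x k‖)) + 4 / ((n : ℝ) + 1) ^ 2 := by
      intro k hk
      have hgpos : 0 < ‖g - x k‖ := lt_of_lt_of_le (by positivity) (hlbg k hk)
      have hzpos : 0 < ‖z - x k‖ := lt_of_lt_of_le hdpos (hlbz k hk)
      have htr : ‖z - x k‖ ≤ ‖g - x k‖ + mesh u n := by
        have := htri k
        linarith [hzg]
      have hdv : mesh u n / ‖g - x k‖ ≤ 4 / ((n : ℝ) + 1) ^ 2 := by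
        calc mesh u n / ‖g - x k‖ ≤ mesh u n / (d / 2) :=
              div_le_div_of_nonneg_left hpos.le (by positivity) (hlbg k hk)
          _ = 4 / ((n : ℝ) + 1) ^ 2 := by
              rw [mesh, hd]
              field_simp
              ring
      calc Real.log (‖z - x k‖) ≤ Real.log (‖g - x k‖ + mesh u n) :=
            Real.log_le_log hzpos htr
        _ ≤ Real.log (‖g - x k‖) + mesh u n / ‖g - x k‖ :=
            log_add_le hgpos hpos.le
        _ ≤ Real.log (max (s g) (‖g - x k‖)) + 4 / ((n : ℝ) + 1) ^ 2 := by
            have hm : Real.log (‖g - x k‖) ≤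
                Real.log (max (s g) (‖g - x k‖)) :=
              Real.log_le_log hgpos (le_max_right _ _)
            linarith
    have hlogprod : Real.log (‖∏ k ∈ Finset.range n, (z - x k)‖) =
        ∑ k ∈ Finset.range n, Real.log (‖z - x k‖) := by
      rw [Complex.norm_prod]
      exact Real.log_prod
        (fun k hk => (lt_of_lt_of_le hdpos (hlbz k (Finset.mem_range.1 hk))).ne')
    have hsum : ∑ k ∈ Finset.range n, Real.log (‖z - x k‖) ≤ -(δ * n) / 8 := by
      have hstep : ∑ k ∈ Finset.range n, Real.log (‖z - x k‖) ≤
          (∑ k ∈ Finset.range n, Real.log (max (s g) (‖g - x k‖))) +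
            (n : ℝ) * (4 / ((n : ℝ) + 1) ^ 2) := by
        have h1 : ∑ k ∈ Finset.range n, Real.log (‖z - x k‖) ≤
            ∑ k ∈ Finset.range n,
              (Real.log (max (s g) (‖g - x k‖)) + 4 / ((n : ℝ) + 1) ^ 2) :=
          Finset.sum_le_sum (fun k hk => hfac k (Finset.mem_range.1 hk))
        rw [Finset.sum_add_distrib, Finset.sum_const, Finset.card_range, nsmul_eq_mul] at h1
        exact h1
      have h2 : (n : ℝ) * (4 / ((n : ℝ) + 1) ^ 2) ≤ 4 / ((n : ℝ) + 1) := by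
        have e : (n : ℝ) * (4 / ((n : ℝ) + 1) ^ 2) = 4 * (n : ℝ) / ((n : ℝ) + 1) ^ 2 := by
          ring
        rw [e, div_le_div_iff₀ (by positivity) (by positivity)]
        nlinarith
      have h3 : 4 / ((n : ℝ) + 1) ≤ δ * n / 8 := by
        rw [div_le_div_iff₀ (by positivity) (by norm_num)]
        nlinarith
      have h4 := hb g hggrid hgK
      linarith
    have hppos : 0 < ‖∏ k ∈ Finset.range n, (z - x k)‖ := by
      rw [Complex.norm_prod]
      apply Finset.prod_pos
      intro k hk
      exact lt_of_lt_of_le hdpos (hlbz k (Finset.mem_range.1 hk))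
    calc ‖∏ k ∈ Finset.range n, (z - x k)‖
        = Real.exp (Real.log (‖∏ k ∈ Finset.range n, (z - x k)‖)) :=
          (Real.exp_log hppos).symm
      _ ≤ Real.exp (-(δ * n) / 8) := by
          rw [Real.exp_le_exp, hlogprod]; exact hsum
  -- Step C: maximum modulus
  have hmax : ∀ z ∈ closedBall ctr q,
      ‖∏ k ∈ Finset.range n, (z - x k)‖ ≤ Real.exp (-(δ * n) / 8) := by
    intro z hz
    have hdiff : Differentiable ℂ (fun z : ℂ => ∏ k ∈ Finset.range n, (z - x k)) := by
      intro w
      exact DifferentiableAt.fun_finsetProd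
        (fun i _ => (differentiable_id.sub_const (x i)).differentiableAt)
    have hfr : ∀ w ∈ frontier (ball ctr q),
        ‖∏ k ∈ Finset.range n, (w - x k)‖ ≤ Real.exp (-(δ * n) / 8) := by
      intro w hw
      rw [frontier_ball ctr hq0.ne'] at hw
      have hwq : ‖w - ctr‖ = q := by
        rw [mem_sphere, Complex.dist_eq] at hw; exact hw
      simpa using hcirc w hwq
    have hcl : z ∈ closure (ball ctr q) := by
      rw [closure_ball ctr hq0.ne']; exact hz
    have := Complex.norm_le_of_forall_mem_frontier_norm_le isBounded_ball
      hdiff.diffContOnCl hfr hcl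
    simpa using this
  -- Step D: the ball of radius a+u is in the lemniscate
  have hball : ball ctr (a + u) ⊆
      {z : ℂ | ‖∏ k ∈ Finset.range n, (z - x k)‖ < 1} := by
    intro z hz
    have hz' : z ∈ closedBall ctr q := by
      rw [mem_closedBall]
      rw [mem_ball] at hz
      linarith [hqIcc.1]
    have h1 := hmax z hz'
    have hb1 : Real.exp (-(δ * n) / 8) < 1 := by
      calc Real.exp (-(δ * n) / 8) < Real.exp 0 := by
            rw [Real.exp_lt_exp]
            nlinarith
        _ = 1 := Real.exp_zero
    exact lt_of_le_of_lt h1 hb1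
  -- Step E: conclude on the inradius
  have hR0 : 0 ≤ R := le_trans (norm_nonneg _) (hx 0 hn1)
  have hΛsub : {z : ℂ | ‖∏ k ∈ Finset.range n, (z - x k)‖ < 1} ⊆
      closedBall 0 (R + 2) := by
    intro z hzΛ
    by_contra hzout
    rw [mem_closedBall, Complex.dist_eq, sub_zero, not_le] at hzout
    have hfac2 : ∀ k < n, (2 : ℝ) ≤ ‖z - x k‖ := by
      intro k hk
      have h1 : ‖z‖ - ‖x k‖ ≤ ‖z - x k‖ := by
        have := norm_sub_norm_le z (x k)
        simpa using this
      linarith [hx k hk]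
    have hge : (2 : ℝ) ≤ ‖∏ k ∈ Finset.range n, (z - x k)‖ := by
      rw [Complex.norm_prod]
      calc (2 : ℝ) = 2 ^ 1 := (pow_one 2).symm
        _ ≤ 2 ^ n := pow_le_pow_right₀ (by norm_num) hn1
        _ = ∏ _k ∈ Finset.range n, (2 : ℝ) := by
            rw [Finset.prod_const, Finset.card_range]
        _ ≤ ∏ k ∈ Finset.range n, ‖z - x k‖ :=
            Finset.prod_le_prod (fun k _ => by norm_num)
              (fun k hk => hfac2 k (Finset.mem_range.1 hk))
    rw [Set.mem_setOf_eq] at hzΛ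
    linarith
  have hbdd : BddAbove {r : ℝ | 0 < r ∧ ∃ c : ℂ,
      ball c r ⊆ {z : ℂ | ‖∏ k ∈ Finset.range n, (z - x k)‖ < 1}} := by
    refine ⟨4 * R + 16, ?_⟩
    rintro ρ ⟨hρ0, c₀, hc₀⟩
    have hc₀mem : ‖c₀‖ ≤ R + 2 := by
      have := hΛsub (hc₀ (mem_ball_self hρ0))
      simpa [Complex.dist_eq] using this
    have hwb : (c₀ + ((ρ / 2 : ℝ) : ℂ)) ∈ ball c₀ ρ := by
      rw [mem_ball, Complex.dist_eq]
      have : c₀ + ((ρ / 2 : ℝ) : ℂ) - c₀ = ((ρ / 2 : ℝ) : ℂ) := by ring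
      rw [this, Complex.norm_real, Real.norm_eq_abs, abs_of_pos (by linarith)]
      linarith
    have hw : ‖c₀ + ((ρ / 2 : ℝ) : ℂ)‖ ≤ R + 2 := by
      have := hΛsub (hc₀ hwb)
      simpa [Complex.dist_eq] using this
    have habs : ‖(c₀ + ((ρ / 2 : ℝ) : ℂ)) - c₀‖ = ρ / 2 := by
      have : c₀ + ((ρ / 2 : ℝ) : ℂ) - c₀ = ((ρ / 2 : ℝ) : ℂ) := by ring
      rw [this, Complex.norm_real, Real.norm_eq_abs, abs_of_pos (by linarith)]
    have htri : ‖(c₀ + ((ρ / 2 : ℝ) : ℂ)) - c₀‖ ≤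
        ‖c₀ + ((ρ / 2 : ℝ) : ℂ)‖ + ‖c₀‖ := by
      have := norm_sub_le (c₀ + ((ρ / 2 : ℝ) : ℂ)) c₀
      simpa using this
    rw [habs] at htri
    linarith
  calc a ≤ a + u := by linarith
    _ ≤ inradius {z : ℂ | ‖∏ k ∈ Finset.range n, (z - x k)‖ < 1} :=
      le_csSup hbdd ⟨by linarith, ctr, hball⟩

end LemHelper

set_option maxHeartbeats 2000000 in
theorem statement2
    {Ω : Type*} [MeasurableSpace Ω] (P : Measure Ω) [IsProbabilityMeasure P]
    (μ : Measure ℂ) [IsProbabilityMeasure μ] (hS : IsCompact (msupport μ))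
    (hA : AssumptionA μ)
    (X : ℕ → Ω → ℂ) (hmeas : ∀ i, Measurable (X i))
    (hid : ∀ i, Measure.map (X i) P = μ)
    (hindep : iIndepFun X P)
    (hneg : Set.Nonempty {z : ℂ | logPot μ z < 0})
    (a : ℝ) (ha : 0 < a) (ha' : a < inradius {z : ℂ | logPot μ z < 0}) :
    ∃ c > (0 : ℝ), ∀ᶠ n : ℕ in atTop,
      1 - ENNReal.ofReal (Real.exp (-c * n)) ≤
        P {ω | a ≤ inradius (lemniscate X n ω)} := by
  classical
  -- support bound
  obtain ⟨R₀, hR₀⟩ := hS.isBounded.subset_closedBall 0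
  set R := max R₀ 0 with hR
  have hRS : msupport μ ⊆ closedBall 0 R :=
    hR₀.trans (closedBall_subset_closedBall (le_max_left _ _))
  have hR0 : (0:ℝ) ≤ R := le_max_right _ _
  -- center and radius
  have hTne : Set.Nonempty {r : ℝ | 0 < r ∧ ∃ c : ℂ, ball c r ⊆ {z : ℂ | logPot μ z < 0}} := by
    by_contra hempty
    rw [Set.not_nonempty_iff_eq_empty] at hempty
    rw [inradius, hempty, Real.sSup_empty] at ha'
    linarith
  obtain ⟨r, hrmem, har⟩ := exists_lt_of_lt_csSup hTne ha'
  obtain ⟨hr0, ctr, hctr⟩ := hrmem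
  set u : ℝ := (r - a) / 8 with hu'
  have hu : 0 < u := by rw [hu']; linarith
  set K : Set ℂ := closedBall ctr (a + 3 * u) with hK'
  have hKsub : K ⊆ {z : ℂ | logPot μ z < 0} := by
    intro z hz
    apply hctr
    rw [mem_ball]
    rw [hK', mem_closedBall] at hz
    have h3 : a + 3 * u < r := by rw [hu']; linarith
    linarith
  have hKcompact : IsCompact K := isCompact_closedBall _ _
  have hKne : K.Nonempty := ⟨ctr, mem_closedBall_self (by linarith)⟩
  obtain ⟨δ, s₀, hδ0, hδ1, hs₀0, hs₀1, hcover⟩ :=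
    LemHelper.cover hA hRS hKcompact hKne (fun z hz => hKsub hz)
  choose! sfun hsf0 hsf1 hsfneg using hcover
  -- constant B
  set D : ℝ := ‖ctr‖ + (a + 3 * u) + R with hD'
  set B : ℝ := 1 + (-Real.log s₀) + Real.log (max 1 D) with hB'
  have hls₀ : Real.log s₀ < 0 := Real.log_neg hs₀0 hs₀1
  have hlD : 0 ≤ Real.log (max 1 D) := Real.log_nonneg (le_max_left _ _)
  have hB1 : 1 ≤ B := by rw [hB']; linarith
  -- a.e. bound for the clipped kernels
  have hae : ∀ᵐ w ∂μ, w ∈ msupport μ := by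
    rw [ae_iff]
    exact LemHelper.msupport_conull μ
  have hbd : ∀ z ∈ K, ∀ᵐ w ∂μ, |LemHelper.clip (sfun z) z w| ≤ B := by
    intro z hz
    filter_upwards [hae] with w hw
    have hzw : ‖z - w‖ ≤ D := by
      have hz2 : ‖z - ctr‖ ≤ a + 3 * u := by
        rw [hK', mem_closedBall, Complex.dist_eq] at hz; exact hz
      have h1 : ‖z‖ - ‖ctr‖ ≤ ‖z - ctr‖ := by
        have := norm_sub_norm_le z ctr
        simpa using this
      have h2 : ‖w‖ ≤ R := by
        have := hRS hw
        simpa [Complex.dist_eq] using this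
      have h3 : ‖z - w‖ ≤ ‖z‖ + ‖w‖ := by
        have := norm_sub_le z w
        simpa using this
      rw [hD']; linarith
    have h4 := LemHelper.abs_clip_le (lt_of_lt_of_le hs₀0 (hsf0 z hz)) (hsf1 z hz).le hzw
    have h5 : -Real.log (sfun z) ≤ -Real.log s₀ :=
      neg_le_neg (Real.log_le_log hs₀0 (hsf0 z hz))
    rw [hB']; linarith
  -- exponent constant
  set cexp : ℝ := δ ^ 2 / (8 * B ^ 2) with hcexp'
  have hB0 : (0:ℝ) < B := lt_of_lt_of_le one_pos hB1
  have hcexp0 : 0 < cexp := by rw [hcexp']; positivity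
  refine ⟨cexp / 2, by positivity, ?_⟩
  -- net, events
  set net : ℕ → Finset ℂ := fun n => (LemHelper.grid ctr a u n).filter (fun g => g ∈ K)
    with hnet'
  set Ev : ℂ → ℕ → Set Ω := fun z n =>
    {ω | ∑ k ∈ Finset.range n, LemHelper.clip (sfun z) z (X k ω) ≤ -(δ * n) / 4} with hEv'
  have hEvMeas : ∀ z n, MeasurableSet (Ev z n) := by
    intro z n
    apply measurableSet_le _ measurable_const
    apply Finset.measurable_sum
    intro k _
    exact (LemHelper.clip_meas (sfun z) z).comp (hmeas k)
  have hbad : ∀ n, ∀ z ∈ net n, P (Ev z n)ᶜ ≤ ENNReal.ofReal (Real.exp (-cexp * n)) := by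
    intro n z hz
    have hzK : z ∈ K := (Finset.mem_filter.1 hz).2
    have hsub : (Ev z n)ᶜ ⊆
        {ω | -(δ * n) / 4 ≤ ∑ k ∈ Finset.range n, LemHelper.clip (sfun z) z (X k ω)} := by
      intro ω hω
      simp only [hEv', Set.mem_compl_iff, Set.mem_setOf_eq, not_le] at hω
      exact le_of_lt hω
    apply (measure_mono hsub).trans
    have hcher := LemHelper.chernoff P μ X hmeas hid hindep
      (LemHelper.clip_meas (sfun z) z) hB1 hδ0 hδ1 (hbd z hzK) (hsfneg z hzK) n
    rw [hcexp']
    exact hcher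
  set G : ℕ → Set Ω := fun n => ⋂ z ∈ net n, Ev z n with hG'
  have hGmeas : ∀ n, MeasurableSet (G n) := fun n =>
    MeasurableSet.biInter (Finset.countable_toSet _) (fun z _ => hEvMeas z n)
  have hGc : ∀ n, P (G n)ᶜ ≤ ((net n).card : ENNReal) * ENNReal.ofReal (Real.exp (-cexp * n)) := by
    intro n
    rw [hG', Set.compl_iInter₂]
    calc P (⋃ z ∈ net n, (Ev z n)ᶜ) ≤ ∑ z ∈ net n, P (Ev z n)ᶜ :=
          measure_biUnion_finset_le _ _
      _ ≤ ∑ _z ∈ net n, ENNReal.ofReal (Real.exp (-cexp * n)) :=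
          Finset.sum_le_sum (hbad n)
      _ = ((net n).card : ENNReal) * ENNReal.ofReal (Real.exp (-cexp * n)) := by
          rw [Finset.sum_const, nsmul_eq_mul]
  -- the support event
  set H : ℕ → Set Ω := fun n => {ω | ∀ k < n, X k ω ∈ msupport μ} with hH'
  have hHc : ∀ n, P (H n)ᶜ = 0 := by
    intro n
    have hsub : (H n)ᶜ ⊆ ⋃ k ∈ Finset.range n, (X k) ⁻¹' (msupport μ)ᶜ := by
      intro ω hω
      simp only [hH', Set.mem_compl_iff, Set.mem_setOf_eq, not_forall] at hω
      obtain ⟨k, hk, hmem⟩ := hω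
      exact Set.mem_biUnion (Finset.mem_range.2 hk) hmem
    apply le_antisymm _ (zero_le)
    apply (measure_mono hsub).trans
    apply (measure_biUnion_finset_le _ _).trans
    apply le_of_eq
    apply Finset.sum_eq_zero
    intro k _
    rw [← Measure.map_apply (hmeas k)
      (LemHelper.msupport_isClosed μ).measurableSet.compl, hid k]
    exact LemHelper.msupport_conull μ
  -- inclusion in the target event
  have hincl : ∀ n : ℕ, 1 ≤ n → (32:ℝ) ≤ δ * ((n:ℝ) * ((n:ℝ) + 1)) →
      G n ∩ H n ⊆ {ω | a ≤ inradius (lemniscate X n ω)} := by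
    intro n hn1 hn32 ω hω
    obtain ⟨hωG, hωH⟩ := hω
    have hx' : ∀ k < n, ‖(fun k => X k ω) k‖ ≤ R := by
      intro k hk
      have := hRS (hωH k hk)
      simpa [Complex.dist_eq] using this
    have hb' : ∀ g ∈ LemHelper.grid ctr a u n, g ∈ closedBall ctr (a + 3 * u) →
        (∑ k ∈ Finset.range n,
          Real.log (max (sfun g) (‖g - (fun k => X k ω) k‖))) ≤ -(δ * n) / 4 := by
      intro g hggrid hgball
      have hgnet : g ∈ net n := by
        rw [hnet', Finset.mem_filter]
        exact ⟨hggrid, by rw [hK']; exact hgball⟩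
      have hωEv : ω ∈ Ev g n := by
        rw [hG'] at hωG
        exact Set.mem_iInter₂.1 hωG g hgnet
      rw [hEv', Set.mem_setOf_eq] at hωEv
      exact hωEv
    have hres := LemHelper.det ctr sfun (fun k => X k ω) ha hu hδ0 hn1 hn32 hx' hb'
    exact hres
  -- eventual comparison of the error terms
  set C₁ : ℝ := (a + 2 * u) / u + 2 with hC₁'
  have hC₁0 : 0 ≤ C₁ := by
    rw [hC₁']
    have : (0:ℝ) ≤ (a + 2 * u) / u := by positivity
    linarith
  set C₂ : ℝ := (2 * C₁ + 1) ^ 2 with hC₂'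
  have hcard : ∀ n : ℕ, ((net n).card : ℝ) ≤ C₂ * ((n:ℝ) + 1) ^ 6 := by
    intro n
    have h1 : (net n).card ≤ (LemHelper.grid ctr a u n).card := Finset.card_filter_le _ _
    have h2 := LemHelper.grid_card ctr a u n
    have h3 := LemHelper.gridN_le (a := a) (u := u) ha.le hu n
    have h4 : ((net n).card : ℝ) ≤ (2 * (LemHelper.gridN a u n : ℝ) + 1) ^ 2 := by
      have h5 : ((net n).card : ℕ) ≤ (2 * LemHelper.gridN a u n + 1) ^ 2 := h1.trans h2
      exact_mod_cast h5
    have hcube := LemHelper.one_le_cube n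
    have h6 : 2 * (LemHelper.gridN a u n : ℝ) + 1 ≤ (2 * C₁ + 1) * ((n:ℝ) + 1) ^ 3 := by
      rw [hC₁']
      nlinarith
    calc ((net n).card : ℝ) ≤ (2 * (LemHelper.gridN a u n : ℝ) + 1) ^ 2 := h4
      _ ≤ ((2 * C₁ + 1) * ((n:ℝ) + 1) ^ 3) ^ 2 := by
          apply pow_le_pow_left₀ (by positivity) h6
      _ = C₂ * ((n:ℝ) + 1) ^ 6 := by rw [hC₂']; ring
  set β : ℝ := cexp / 2 with hβ'
  have hβ0 : 0 < β := by rw [hβ']; positivity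
  have htend : Tendsto (fun n : ℕ => C₂ * ((n:ℝ) + 1) ^ 6 * Real.exp (-β * n)) atTop (𝓝 0) := by
    have h1 : Tendsto (fun y : ℝ => y ^ 6 * Real.exp (-y)) atTop (𝓝 0) :=
      Real.tendsto_pow_mul_exp_neg_atTop_nhds_zero 6
    have h2 : Tendsto (fun n : ℕ => β * ((n:ℝ) + 1)) atTop atTop := by
      apply Tendsto.const_mul_atTop hβ0
      exact tendsto_atTop_add_const_right _ 1 tendsto_natCast_atTop_atTop
    have h3 := (h1.comp h2).const_mul (C₂ / β ^ 6 * Real.exp β)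
    rw [mul_zero] at h3
    apply h3.congr
    intro n
    have hβne : β ≠ 0 := hβ0.ne'
    simp only [Function.comp]
    rw [show -(β * ((n:ℝ) + 1)) = -β * n + -β by ring, Real.exp_add, mul_pow]
    rw [Real.exp_neg β]
    field_simp
  have hev1 : ∀ᶠ n : ℕ in atTop, C₂ * ((n:ℝ) + 1) ^ 6 * Real.exp (-β * n) ≤ 1 :=
    htend.eventually_le_const one_pos
  have hev32 : ∀ᶠ n : ℕ in atTop, (32:ℝ) ≤ δ * ((n:ℝ) * ((n:ℝ) + 1)) := by
    filter_upwards [eventually_ge_atTop ⌈(32:ℝ) / δ⌉₊] with n hn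
    have h1 : (32:ℝ) / δ ≤ (n:ℝ) := by
      calc (32:ℝ) / δ ≤ (⌈(32:ℝ) / δ⌉₊ : ℝ) := Nat.le_ceil _
        _ ≤ (n:ℝ) := by exact_mod_cast hn
    have h2 : (32:ℝ) ≤ δ * n := by
      rw [div_le_iff₀ hδ0] at h1
      calc (32:ℝ) ≤ (n:ℝ) * δ := h1
        _ = δ * n := mul_comm _ _
    have h3 : (0:ℝ) ≤ (n:ℝ) := Nat.cast_nonneg n
    have h4 : (0:ℝ) ≤ δ * ((n:ℝ) * (n:ℝ)) := by positivity
    have h5 : δ * ((n:ℝ) * ((n:ℝ) + 1)) = δ * (n:ℝ) + δ * ((n:ℝ) * (n:ℝ)) := by ring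
    linarith
  -- final assembly
  filter_upwards [hev1, hev32, eventually_ge_atTop 1] with n hn1 hn32 hnge
  have hcardE : ((net n).card : ENNReal) * ENNReal.ofReal (Real.exp (-cexp * n)) ≤
      ENNReal.ofReal (Real.exp (-(cexp / 2) * n)) := by
    have hreal : ((net n).card : ℝ) * Real.exp (-cexp * n) ≤ Real.exp (-(cexp / 2) * n) := by
      have he : Real.exp (-cexp * n) = Real.exp (-β * n) * Real.exp (-β * n) := by
        rw [← Real.exp_add, hβ']
        congr 1
        ring
      have hb2 : ((net n).card : ℝ) * Real.exp (-β * n) ≤ 1 := by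
        calc ((net n).card : ℝ) * Real.exp (-β * n)
            ≤ C₂ * ((n:ℝ) + 1) ^ 6 * Real.exp (-β * n) := by
              apply mul_le_mul_of_nonneg_right (hcard n) (Real.exp_pos _).le
          _ ≤ 1 := hn1
      calc ((net n).card : ℝ) * Real.exp (-cexp * n)
          = (((net n).card : ℝ) * Real.exp (-β * n)) * Real.exp (-β * n) := by
            rw [he]; ring
        _ ≤ 1 * Real.exp (-β * n) := by
            apply mul_le_mul_of_nonneg_right hb2 (Real.exp_pos _).le
        _ = Real.exp (-(cexp / 2) * n) := by rw [one_mul, hβ']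
    calc ((net n).card : ENNReal) * ENNReal.ofReal (Real.exp (-cexp * n))
        = ENNReal.ofReal (((net n).card : ℝ) * Real.exp (-cexp * n)) := by
          rw [ENNReal.ofReal_mul (Nat.cast_nonneg _), ENNReal.ofReal_natCast]
      _ ≤ ENNReal.ofReal (Real.exp (-(cexp / 2) * n)) := ENNReal.ofReal_le_ofReal hreal
  calc 1 - ENNReal.ofReal (Real.exp (-(cexp / 2) * n))
      ≤ 1 - P (G n)ᶜ := by
        apply tsub_le_tsub_left
        exact (hGc n).trans hcardE
    _ ≤ P (G n) := by
        have hsum := measure_add_measure_compl (μ := P) (hGmeas n)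
        rw [measure_univ] at hsum
        rw [tsub_le_iff_right, ← hsum]
    _ = P (G n ∩ H n) := (measure_inter_conull (hHc n)).symm
    _ ≤ P {ω | a ≤ inradius (lemniscate X n ω)} := measure_mono (hincl n hnge hn32)
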